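/- The general linear group GL(2,ℤ) admits the presentation ⟨u, s, r | s⁴ = 1, r² = 1, r s r⁻¹ = s⁻¹, r u r⁻¹ = u⁻¹, s² = u³⟩. Precisely: the group homomorphism from the free group on three generators u, s, r to GL(2,ℤ) sending s ↦ S, u ↦ U, r ↦ R kills the normal closure of the relators {s⁴, r², rsr⁻¹s, rur⁻¹u, s²u⁻³}, and the induced homomorphism from the presented group on these generators and relators to GL(2,ℤ) is an isomorphism. -/

import Mathlib

open Matrix Pointwise

/-- `GL(2,ℤ)`: invertible `2 × 2` integer matrices. -/
abbrev GL2Z := Matrix.GeneralLinearGroup (Fin 2) ℤ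

/-- The element `S = !![0, -1; 1, 0]` of `GL(2,ℤ)`. -/
def Sgen : GL2Z :=
  ⟨!![0, -1; 1, 0], !![0, 1; -1, 0],
    by norm_num [Matrix.mul_fin_two, Matrix.one_fin_two.symm],
    by norm_num [Matrix.mul_fin_two, Matrix.one_fin_two.symm]⟩

/-- The element `U = !![0, -1; 1, 1]` of `GL(2,ℤ)`. -/
def Ugen : GL2Z :=
  ⟨!![0, -1; 1, 1], !![1, 1; -1, 0],
    by norm_num [Matrix.mul_fin_two, Matrix.one_fin_two.symm],
    by norm_num [Matrix.mul_fin_two, Matrix.one_fin_two.symm]⟩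

/-- The element `R = !![0, 1; 1, 0]` of `GL(2,ℤ)`. -/
def Rgen : GL2Z :=
  ⟨!![0, 1; 1, 0], !![0, 1; 1, 0],
    by norm_num [Matrix.mul_fin_two, Matrix.one_fin_two.symm],
    by norm_num [Matrix.mul_fin_two, Matrix.one_fin_two.symm]⟩

/-- Generators: `0 ↦ u`, `1 ↦ s`, `2 ↦ r`. -/
def genMap : Fin 3 → GL2Z := ![Ugen, Sgen, Rgen]

/-- The relators `{s⁴, r², rsr⁻¹s, rur⁻¹u, s²u⁻³}`. -/
def glRels : Set (FreeGroup (Fin 3)) :=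
  {(FreeGroup.of 1) ^ 4,
   (FreeGroup.of 2) ^ 2,
   FreeGroup.of 2 * FreeGroup.of 1 * (FreeGroup.of 2)⁻¹ * FreeGroup.of 1,
   FreeGroup.of 2 * FreeGroup.of 0 * (FreeGroup.of 2)⁻¹ * FreeGroup.of 0,
   (FreeGroup.of 1) ^ 2 * ((FreeGroup.of 0)⁻¹) ^ 3}

noncomputable section

def Tgen : GL2Z := Sgen⁻¹ * Ugen
lemma Tgen_val : (Tgen : Matrix (Fin 2) (Fin 2) ℤ) = !![1, 1; 0, 1] := by
  show ((Sgen⁻¹ * Ugen : GL2Z) : Matrix (Fin 2) (Fin 2) ℤ) = _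
  ext i j
  fin_cases i <;> fin_cases j <;>
    simp [Sgen, Ugen, Units.val_mul, Matrix.mul_fin_two]

lemma Tgen_zpow_val (n : ℤ) : ((Tgen ^ n : GL2Z) : Matrix (Fin 2) (Fin 2) ℤ) = !![1, n; 0, 1] := by
  induction n using Int.induction_on with
  | zero => ext i j; fin_cases i <;> fin_cases j <;> simp [Matrix.one_fin_two]
  | succ k ih =>
      rw [_root_.zpow_add_one, Units.val_mul, ih, Tgen_val]
      ext i j; fin_cases i <;> fin_cases j <;> simp [Matrix.mul_fin_two] <;> ring
  | pred k ih =>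
      rw [sub_eq_add_neg, _root_.zpow_add, Units.val_mul, ih]
      have : ((Tgen ^ (-1 : ℤ) : GL2Z) : Matrix (Fin 2) (Fin 2) ℤ) = !![1, -1; 0, 1] := by
        have h1 : (Tgen ^ (-1 : ℤ) : GL2Z) = Tgen⁻¹ := by simp
        have h2 : Tgen⁻¹ = (⟨!![1, -1; 0, 1], !![1, 1; 0, 1], by norm_num [Matrix.mul_fin_two, Matrix.one_fin_two.symm], by norm_num [Matrix.mul_fin_two, Matrix.one_fin_two.symm]⟩ : GL2Z) := by
          apply inv_eq_of_mul_eq_one_right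
          ext i j; fin_cases i <;> fin_cases j <;>
            simp [Tgen_val, Units.val_mul, Matrix.mul_fin_two]
        rw [h1, h2]
      rw [this]
      ext i j; fin_cases i <;> fin_cases j <;> simp [Matrix.mul_fin_two]; ring

abbrev Hgen : Subgroup GL2Z := Subgroup.closure {Ugen, Sgen, Rgen}

lemma S_mem : Sgen ∈ Hgen := Subgroup.subset_closure (by simp)
lemma U_mem : Ugen ∈ Hgen := Subgroup.subset_closure (by simp)
lemma R_mem : Rgen ∈ Hgen := Subgroup.subset_closure (by simp)
lemma T_mem : Tgen ∈ Hgen := mul_mem (inv_mem S_mem) U_mem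

lemma val_inj {g h : GL2Z} (H : (g : Matrix (Fin 2) (Fin 2) ℤ) = (h : Matrix (Fin 2) (Fin 2) ℤ)) : g = h :=
  Units.ext H

lemma det_val (g : GL2Z) : (g : Matrix (Fin 2) (Fin 2) ℤ).det = 1 ∨ (g : Matrix (Fin 2) (Fin 2) ℤ).det = -1 := by
  have : IsUnit (g : Matrix (Fin 2) (Fin 2) ℤ).det := by
    exact (Matrix.isUnit_iff_isUnit_det _).mp g.isUnit
  rcases Int.isUnit_iff.mp this with h | h <;> [left; right] <;> exact h

lemma Sgen_sq : Sgen ^ 2 = (⟨-1, -1, by norm_num [Matrix.mul_fin_two, Matrix.one_fin_two.symm], by norm_num [Matrix.mul_fin_two, Matrix.one_fin_two.symm]⟩ : GL2Z) := by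
  apply val_inj
  ext i j; fin_cases i <;> fin_cases j <;>
    simp [Sgen, pow_succ, Units.val_mul, Matrix.mul_fin_two]

lemma mem_of_c_zero (g : GL2Z) (hc : (g : Matrix (Fin 2) (Fin 2) ℤ) 1 0 = 0) : g ∈ Hgen := by
  set M := (g : Matrix (Fin 2) (Fin 2) ℤ) with hM
  have hdet : M.det = M 0 0 * M 1 1 := by
    rw [Matrix.det_fin_two, hc]; ring
  have hd : M 0 0 * M 1 1 = 1 ∨ M 0 0 * M 1 1 = -1 := by
    rw [← hdet]; exact det_val g
  have ha : M 0 0 = 1 ∨ M 0 0 = -1 := by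
    rcases hd with h | h
    · exact (Int.isUnit_iff.mp (isUnit_iff_exists_inv.mpr ⟨_, h⟩))
    · have : M 0 0 * (- M 1 1) = 1 := by linarith
      exact (Int.isUnit_iff.mp (isUnit_iff_exists_inv.mpr ⟨_, this⟩))
  have hdd : M 1 1 = 1 ∨ M 1 1 = -1 := by
    rcases hd with h | h
    · rw [mul_comm] at h
      exact (Int.isUnit_iff.mp (isUnit_iff_exists_inv.mpr ⟨_, h⟩))
    · have : M 1 1 * (- M 0 0) = 1 := by linarith
      exact (Int.isUnit_iff.mp (isUnit_iff_exists_inv.mpr ⟨_, this⟩))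
  set b := M 0 1 with hb
  have hexp : M = !![M 0 0, b; 0, M 1 1] := by
    rw [hb, ← hc]
    exact Matrix.eta_fin_two M
  rcases ha with h1 | h1 <;> rcases hdd with h2 | h2
  · -- a = 1, d = 1 : g = T^b
    have : g = Tgen ^ b := by
      apply val_inj; rw [Tgen_zpow_val, ← hM, hexp, h1, h2]
    rw [this]; exact zpow_mem T_mem b
  · -- a = 1, d = -1 : g = T^(-b) * R * S
    have : g = Tgen ^ (-b) * Rgen * Sgen := by
      apply val_inj
      rw [Units.val_mul, Units.val_mul, Tgen_zpow_val, ← hM, hexp, h1, h2]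
      norm_num [Rgen, Sgen, Matrix.mul_fin_two]
    rw [this]; exact mul_mem (mul_mem (zpow_mem T_mem _) R_mem) S_mem
  · -- a = -1, d = 1 : g = S^2 * T^b * R * S
    have : g = Sgen ^ 2 * Tgen ^ b * Rgen * Sgen := by
      apply val_inj
      rw [Sgen_sq, Units.val_mul, Units.val_mul, Units.val_mul, Tgen_zpow_val,
        ← hM, hexp, h1, h2]
      norm_num [Rgen, Sgen, Matrix.mul_fin_two]
    rw [this]
    exact mul_mem (mul_mem (mul_mem (pow_mem S_mem 2) (zpow_mem T_mem _)) R_mem) S_mem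
  · -- a = -1, d = -1 : g = S^2 * T^(-b)
    have : g = Sgen ^ 2 * Tgen ^ (-b) := by
      apply val_inj
      rw [Sgen_sq, Units.val_mul, Tgen_zpow_val, ← hM, hexp, h1, h2]
      norm_num [Matrix.mul_fin_two]
    rw [this]; exact mul_mem (pow_mem S_mem 2) (zpow_mem T_mem _)

lemma mem_Hgen (g : GL2Z) : g ∈ Hgen := by
  generalize hn : ((g : Matrix (Fin 2) (Fin 2) ℤ) 1 0).natAbs = n
  induction n using Nat.strong_induction_on generalizing g with
  | _ n ih =>
    rcases eq_or_ne ((g : Matrix (Fin 2) (Fin 2) ℤ) 1 0) 0 with hc | hc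
    · exact mem_of_c_zero g hc
    · set M := (g : Matrix (Fin 2) (Fin 2) ℤ) with hM
      set c := M 1 0 with hc0
      set q := M 0 0 / c with hq
      set g' := Sgen * Tgen ^ (-q) * g with hg'
      have hval : (g' : Matrix (Fin 2) (Fin 2) ℤ) =
          !![-c, -(M 1 1); M 0 0 - q * c, M 0 1 - q * M 1 1] := by
        rw [hg', Units.val_mul, Units.val_mul, Tgen_zpow_val]
        rw [show (g : Matrix (Fin 2) (Fin 2) ℤ) = !![M 0 0, M 0 1; c, M 1 1] from by
          rw [← Matrix.eta_fin_two M]]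
        norm_num [Sgen, Matrix.mul_fin_two]
        constructor <;> ring
      have hmod : M 0 0 - q * c = M 0 0 % c := by
        rw [hq]; rw [Int.emod_def]; ring
      have hlt : ((g' : Matrix (Fin 2) (Fin 2) ℤ) 1 0).natAbs < n := by
        have hentry : (g' : Matrix (Fin 2) (Fin 2) ℤ) 1 0 = M 0 0 % c := by
          rw [hval, ← hmod]; simp
        have hn' : c.natAbs = n := hn
        rw [hentry, ← hn']
        have h1 : 0 ≤ M 0 0 % c := Int.emod_nonneg _ hc
        have h2 : M 0 0 % c < |c| := by rw [Int.abs_eq_natAbs]; exact Int.emod_lt _ hc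
        rw [Int.abs_eq_natAbs] at h2
        omega
      have hmem : g' ∈ Hgen := ih _ hlt g' rfl
      have : g = Tgen ^ q * Sgen⁻¹ * g' := by
        rw [hg']; group
      rw [this]
      exact mul_mem (mul_mem (zpow_mem T_mem _) (inv_mem S_mem)) hmem

lemma closure_eq_top : Hgen = ⊤ := by
  rw [Subgroup.eq_top_iff']
  exact mem_Hgen

/-- Möbius transformation of a real number by an integer matrix. -/
def mob (M : Matrix (Fin 2) (Fin 2) ℤ) (x : ℝ) : ℝ :=
  ((M 0 0 : ℝ) * x + (M 0 1 : ℝ)) / ((M 1 0 : ℝ) * x + (M 1 1 : ℝ))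

lemma irr_line {a b : ℤ} {x : ℝ} (hx : Irrational x) (ha : a ≠ 0) :
    (a : ℝ) * x + (b : ℝ) ≠ 0 := by
  intro h
  have : x = ((-b : ℚ) / (a : ℚ) : ℚ) := by
    push_cast
    field_simp
    linarith [h]
  exact hx ⟨_, this.symm⟩

lemma det_unit (g : GL2Z) : ((g : Matrix (Fin 2) (Fin 2) ℤ).det = 1) ∨
    ((g : Matrix (Fin 2) (Fin 2) ℤ).det = -1) := by
  have : IsUnit (g : Matrix (Fin 2) (Fin 2) ℤ).det :=
    (Matrix.isUnit_iff_isUnit_det _).mp g.isUnit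
  rcases Int.isUnit_iff.mp this with h | h <;> [left; right] <;> exact h

lemma denom_ne_zero (g : GL2Z) {x : ℝ} (hx : Irrational x) :
    ((g : Matrix (Fin 2) (Fin 2) ℤ) 1 0 : ℝ) * x + ((g : Matrix (Fin 2) (Fin 2) ℤ) 1 1 : ℝ) ≠ 0 := by
  set M := (g : Matrix (Fin 2) (Fin 2) ℤ) with hM
  rcases eq_or_ne (M 1 0) 0 with hc | hc
  · have hd : M 1 1 ≠ 0 := by
      intro hd
      rcases det_unit g with h | h <;>
        · rw [← hM, Matrix.det_fin_two, hc, hd] at h; simp at h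
    rw [hc]
    simpa using (by exact_mod_cast hd : (M 1 1 : ℝ) ≠ 0)
  · exact irr_line hx hc

lemma mob_irrational (g : GL2Z) {x : ℝ} (hx : Irrational x) :
    Irrational (mob (g : Matrix (Fin 2) (Fin 2) ℤ) x) := by
  set M := (g : Matrix (Fin 2) (Fin 2) ℤ) with hM
  rintro ⟨q, hq⟩
  have hden := denom_ne_zero g hx
  rw [← hM] at hden
  rw [mob] at hq
  rw [eq_comm, div_eq_iff hden] at hq
  -- (q : ℝ) * (c x + d) = a x + b
  have key : ((M 0 0 : ℝ) - q * M 1 0) * x = q * M 1 1 - M 0 1 := by ring_nf; ring_nf at hq; linarith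
  rcases eq_or_ne ((M 0 0 : ℝ) - q * M 1 0) 0 with h0 | h0
  · -- then a = q c and b = q d, so det = 0
    have hb : (M 0 1 : ℝ) = q * M 1 1 := by
      rw [h0, zero_mul] at key; linarith
    have ha : (M 0 0 : ℝ) = q * M 1 0 := by linarith [h0]
    have hdet : ((M.det : ℤ) : ℝ) = 0 := by
      rw [Matrix.det_fin_two]
      push_cast
      rw [ha, hb]
      ring
    rcases det_unit g with h | h <;> rw [← hM] at h <;> rw [h] at hdet <;> norm_num at hdet
  · have : x = (q * M 1 1 - M 0 1) / ((M 0 0 : ℝ) - q * M 1 0) := by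
      field_simp [h0] at key ⊢
      linarith [key]
    apply hx
    exact ⟨(q * M 1 1 - M 0 1) / ((M 0 0 : ℚ) - q * M 1 0), by rw [this]; push_cast; rfl⟩

/-- The set of irrational real numbers. -/
def Irr : Type := { x : ℝ // Irrational x }

instance : MulAction GL2Z Irr where
  smul g x := ⟨mob (g : Matrix (Fin 2) (Fin 2) ℤ) x.1, mob_irrational g x.2⟩
  one_smul x := by
    apply Subtype.ext
    show mob ((1 : GL2Z) : Matrix (Fin 2) (Fin 2) ℤ) x.1 = x.1
    rw [Units.val_one, mob]
    simp [Matrix.one_apply]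
  mul_smul g h x := by
    apply Subtype.ext
    show mob ((g * h : GL2Z) : Matrix (Fin 2) (Fin 2) ℤ) x.1
      = mob (g : Matrix (Fin 2) (Fin 2) ℤ) (mob (h : Matrix (Fin 2) (Fin 2) ℤ) x.1)
    set M := (g : Matrix (Fin 2) (Fin 2) ℤ)
    set N := (h : Matrix (Fin 2) (Fin 2) ℤ)
    have hDN : (N 1 0 : ℝ) * x.1 + (N 1 1 : ℝ) ≠ 0 := denom_ne_zero h x.2
    have hDMN : ((g * h : GL2Z).val 1 0 : ℝ) * x.1 + ((g * h : GL2Z).val 1 1 : ℝ) ≠ 0 :=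
      denom_ne_zero (g * h) x.2
    have hprod : ∀ i j : Fin 2, ((g * h : GL2Z).val i j : ℝ)
        = (M i 0 : ℝ) * (N 0 j : ℝ) + (M i 1 : ℝ) * (N 1 j : ℝ) := by
      intro i j
      rw [Units.val_mul, Matrix.mul_apply, Fin.sum_univ_two]
      push_cast
      rfl
    have hD2 : (M 1 0 : ℝ) * mob N x.1 + (M 1 1 : ℝ) ≠ 0 := denom_ne_zero g (mob_irrational h x.2)
    rw [mob, mob, mob] at *
    simp only [hprod] at hDMN ⊢
    rw [div_eq_div_iff hDMN hD2]
    field_simp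
    ring

lemma smul_val (g : GL2Z) (x : Irr) :
    (g • x).1 = mob (g : Matrix (Fin 2) (Fin 2) ℤ) x.1 := rfl

lemma S_smul (x : Irr) : (Sgen • x).1 = -1 / x.1 := by
  rw [smul_val, mob]
  norm_num [Sgen]

lemma U_smul (x : Irr) : (Ugen • x).1 = -1 / (x.1 + 1) := by
  rw [smul_val, mob]
  norm_num [Ugen]

lemma x_ne (x : Irr) : x.1 ≠ 0 := by simpa using x.2.ne_int 0

lemma x_ne_negone (x : Irr) : x.1 + 1 ≠ 0 := by
  intro h
  exact (x.2.ne_int (-1)) (by push_cast; linarith)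

lemma S_smul_neg {x : Irr} (hx : x.1 < 0) : 0 < (Sgen • x).1 := by
  rw [S_smul]
  exact div_pos_iff.mpr (Or.inr ⟨by norm_num, hx⟩)

lemma U_smul_pos {x : Irr} (hx : 0 < x.1) : -1 < (Ugen • x).1 ∧ (Ugen • x).1 < 0 := by
  rw [U_smul]
  constructor
  · have h1 : 1 / (x.1 + 1) < 1 := by
      rw [div_lt_one (by linarith)]; linarith
    have : -1 / (x.1 + 1) = -(1 / (x.1 + 1)) := by ring
    rw [this]; linarith
  · apply div_neg_of_neg_of_pos <;> [norm_num; linarith]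

lemma U_smul_mid {x : Irr} (hx1 : -1 < x.1) (hx2 : x.1 < 0) : (Ugen • x).1 < -1 := by
  rw [U_smul]
  have h01 : (0:ℝ) < x.1 + 1 := by linarith
  have h1 : x.1 + 1 < 1 := by linarith
  rw [div_lt_iff₀ h01]
  nlinarith

noncomputable def πg : GL2Z →* Equiv.Perm Irr := MulAction.toPermHom GL2Z Irr

lemma πg_smul (g : GL2Z) (x : Irr) : πg g • x = g • x := rfl

lemma Sgen_sq_smul (x : Irr) : Sgen ^ 2 • x = x := by
  apply Subtype.ext
  rw [smul_val]
  have hval : ((Sgen ^ 2 : GL2Z) : Matrix (Fin 2) (Fin 2) ℤ) = !![-1, 0; 0, -1] := by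
    ext i j
    fin_cases i <;> fin_cases j <;>
      simp [Sgen, pow_succ, Units.val_mul, Matrix.mul_fin_two]
  rw [hval, mob]
  norm_num [neg_div_neg_eq]

lemma Ugen_cube : Ugen ^ 3 = Sgen ^ 2 := by
  ext i j
  fin_cases i <;> fin_cases j <;>
    simp [Sgen, Ugen, pow_succ, Units.val_mul, Matrix.mul_fin_two]

lemma hS2 : πg Sgen ^ 2 = 1 := by
  rw [← map_pow]
  ext x
  show (Sgen ^ 2) • x = x
  exact Sgen_sq_smul x

lemma hU3 : πg Ugen ^ 3 = 1 := by
  rw [← map_pow, Ugen_cube]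
  ext x
  show (Sgen ^ 2) • x = x
  exact Sgen_sq_smul x

/- cyclic homomorphisms -/
lemma pow_mod_of_pow_eq_one {G : Type*} [Monoid G] {g : G} {n : ℕ} (hg : g ^ n = 1) (m : ℕ) :
    g ^ (m % n) = g ^ m := by
  conv_rhs => rw [← Nat.div_add_mod m n]
  rw [pow_add, pow_mul, hg, one_pow, one_mul]

def cyclicHom {G : Type*} [Group G] (n : ℕ) [NeZero n] (g : G) (hg : g ^ n = 1) :
    Multiplicative (ZMod n) →* G :=
  MonoidHom.mk' (fun a => g ^ (Multiplicative.toAdd a).val)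
    (fun a b => by
      show g ^ ((Multiplicative.toAdd a + Multiplicative.toAdd b).val) = _
      rw [ZMod.val_add, pow_mod_of_pow_eq_one hg, pow_add])

lemma cyclicHom_apply {G : Type*} [Group G] (n : ℕ) [NeZero n] (g : G) (hg : g ^ n = 1)
    (a : Multiplicative (ZMod n)) : cyclicHom n g hg a = g ^ (Multiplicative.toAdd a).val := rfl

lemma comp_cyclicHom {G H : Type*} [Group G] [Group H] (θ : G →* H) (n : ℕ) [NeZero n]
    (g : G) (hg : g ^ n = 1) :
    θ.comp (cyclicHom n g hg) = cyclicHom n (θ g) (by rw [← map_pow, hg]; exact θ.map_one) :=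
  MonoidHom.ext fun a => by simp [cyclicHom_apply, MonoidHom.comp_apply, map_pow]

/- The family for the ping-pong lemma -/
def Hfam : Fin 2 → Type
  | 0 => Multiplicative (ZMod 2)
  | 1 => Multiplicative (ZMod 3)

instance HfamGroup : (i : Fin 2) → Group (Hfam i)
  | 0 => inferInstanceAs (Group (Multiplicative (ZMod 2)))
  | 1 => inferInstanceAs (Group (Multiplicative (ZMod 3)))

noncomputable def ffam : (i : Fin 2) → Hfam i →* Equiv.Perm Irr
  | 0 => cyclicHom 2 (πg Sgen) hS2
  | 1 => cyclicHom 3 (πg Ugen) hU3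

def Xfam : Fin 2 → Set Irr
  | 0 => {x | 0 < x.1}
  | 1 => {x | x.1 < 0}

lemma sqrt2_irr : Irrational (Real.sqrt 2) := irrational_sqrt_two

lemma Spp {h : Multiplicative (ZMod 2)} (hne : h ≠ 1) :
    cyclicHom 2 (πg Sgen) hS2 h • Xfam 1 ⊆ Xfam 0 := by
  have hval : (Multiplicative.toAdd h).val = 1 := by
    have h2 : (Multiplicative.toAdd h).val < 2 := ZMod.val_lt _
    have h0 : (Multiplicative.toAdd h).val ≠ 0 := by
      intro hv
      apply hne
      have : Multiplicative.toAdd h = 0 := (ZMod.val_eq_zero _).mp hv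
      simpa using congrArg Multiplicative.ofAdd this
    omega
  have hfh : cyclicHom 2 (πg Sgen) hS2 h = πg Sgen := by
    rw [cyclicHom_apply, hval, pow_one]
  rw [hfh]
  rintro y ⟨x, hx, rfl⟩
  show (0 : ℝ) < (πg Sgen • x).1
  rw [πg_smul]
  exact S_smul_neg hx

lemma Upp {h : Multiplicative (ZMod 3)} (hne : h ≠ 1) :
    cyclicHom 3 (πg Ugen) hU3 h • Xfam 0 ⊆ Xfam 1 := by
  have hUX : ∀ x ∈ Xfam 0, Ugen • x ∈ Xfam 1 := fun x hx => (U_smul_pos hx).2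
  have hUX2 : ∀ x ∈ Xfam 0, Ugen • Ugen • x ∈ Xfam 1 := by
    intro x hx
    have h1 := U_smul_pos hx
    have := U_smul_mid h1.1 h1.2
    show (Ugen • Ugen • x).1 < 0
    linarith
  have h3 : (Multiplicative.toAdd h).val < 3 := ZMod.val_lt _
  have h0 : (Multiplicative.toAdd h).val ≠ 0 := by
    intro hv
    apply hne
    have : Multiplicative.toAdd h = 0 := (ZMod.val_eq_zero _).mp hv
    simpa using congrArg Multiplicative.ofAdd this
  have hfh : cyclicHom 3 (πg Ugen) hU3 h = πg Ugen ^ (Multiplicative.toAdd h).val := rfl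
  rintro y ⟨x, hx, rfl⟩
  show (cyclicHom 3 (πg Ugen) hU3 h) • x ∈ Xfam 1
  interval_cases hv : (Multiplicative.toAdd h).val
  · exact absurd rfl h0
  · rw [hfh, pow_one, πg_smul]
    exact hUX x hx
  · rw [hfh, pow_two, ← _root_.map_mul, πg_smul, mul_smul]
    exact hUX2 x hx

lemma pingpong : Function.Injective (Monoid.CoprodI.lift ffam) := by
  apply Monoid.CoprodI.lift_injective_of_ping_pong ffam _ Xfam
  · -- nonempty
    intro i
    match i with
    | 0 => exact ⟨⟨Real.sqrt 2, sqrt2_irr⟩, by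
        show (0:ℝ) < Real.sqrt 2
        positivity⟩
    | 1 => exact ⟨⟨-Real.sqrt 2, sqrt2_irr.neg⟩, by
        show (-Real.sqrt 2 : ℝ) < 0
        have : 0 < Real.sqrt 2 := by positivity
        linarith⟩
  · -- disjoint
    have key : Disjoint (Xfam 0) (Xfam 1) := by
      rw [Set.disjoint_left]
      intro x hx hx'
      exact absurd (show (0:ℝ) < x.1 from hx) (not_lt.mpr (le_of_lt hx'))
    intro i j hij
    match i, j, hij with
    | 0, 1, _ => exact key
    | 1, 0, _ => exact key.symm
    | 0, 0, hij => exact absurd rfl hij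
    | 1, 1, hij => exact absurd rfl hij
  · -- ping pong condition
    intro i j hij
    match i, j, hij with
    | 0, 0, hij => exact absurd rfl hij
    | 1, 1, hij => exact absurd rfl hij
    | 0, 1, _ => exact fun h hne => Spp hne
    | 1, 0, _ => exact fun h hne => Upp hne
  · -- cardinality
    right
    exact ⟨1, by
      rw [show Hfam 1 = Multiplicative (ZMod 3) from rfl]
      simp [Cardinal.mk_fintype]⟩


/-! ### The presented group side -/

lemma rels_hold : ∀ rel ∈ glRels, FreeGroup.lift genMap rel = 1 := by
  have hU : FreeGroup.lift genMap (FreeGroup.of 0) = Ugen := by simp [genMap]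
  have hS : FreeGroup.lift genMap (FreeGroup.of 1) = Sgen := by simp [genMap]
  have hR : FreeGroup.lift genMap (FreeGroup.of 2) = Rgen := by simp [genMap]
  intro rel hrel
  simp only [glRels, Set.mem_insert_iff, Set.mem_singleton_iff] at hrel
  rcases hrel with rfl | rfl | rfl | rfl | rfl
  · rw [map_pow, hS]
    ext i j
    fin_cases i <;> fin_cases j <;>
      simp [Sgen, pow_succ, Units.val_mul, Matrix.mul_fin_two]
  · rw [map_pow, hR]
    ext i j
    fin_cases i <;> fin_cases j <;>
      simp [Rgen, pow_succ, Units.val_mul, Matrix.mul_fin_two]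
  · rw [_root_.map_mul, _root_.map_mul, _root_.map_mul, map_inv, hR, hS]
    ext i j
    fin_cases i <;> fin_cases j <;>
      simp [Rgen, Sgen, Units.val_mul, Matrix.mul_fin_two]
  · rw [_root_.map_mul, _root_.map_mul, _root_.map_mul, map_inv, hR, hU]
    ext i j
    fin_cases i <;> fin_cases j <;>
      simp [Rgen, Ugen, Units.val_mul, Matrix.mul_fin_two]
  · rw [_root_.map_mul, map_pow, map_pow, map_inv, hS, hU]
    rw [inv_pow, Ugen_cube, mul_inv_cancel]

abbrev PG := PresentedGroup glRels

noncomputable def φh : PG →* GL2Z := PresentedGroup.toGroup rels_hold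

def pu : PG := PresentedGroup.of 0
def ps : PG := PresentedGroup.of 1
def pr : PG := PresentedGroup.of 2

lemma φ_pu : φh pu = Ugen := by
  rw [pu, φh, PresentedGroup.toGroup.of]; simp [genMap]
lemma φ_ps : φh ps = Sgen := by
  rw [ps, φh, PresentedGroup.toGroup.of]; simp [genMap]
lemma φ_pr : φh pr = Rgen := by
  rw [pr, φh, PresentedGroup.toGroup.of]; simp [genMap]

lemma mk_rel {r : FreeGroup (Fin 3)} (hr : r ∈ glRels) : PresentedGroup.mk glRels r = 1 :=
  (QuotientGroup.eq_one_iff _).mpr (Subgroup.subset_normalClosure hr)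

lemma prel_s4 : ps ^ 4 = 1 := by
  have := mk_rel (show (FreeGroup.of 1) ^ 4 ∈ glRels by simp [glRels])
  rw [map_pow] at this
  exact this

lemma prel_r2 : pr ^ 2 = 1 := by
  have := mk_rel (show (FreeGroup.of 2) ^ 2 ∈ glRels by simp [glRels])
  rw [map_pow] at this
  exact this

lemma prel_rs : pr * ps * pr⁻¹ * ps = 1 := by
  have := mk_rel (show FreeGroup.of 2 * FreeGroup.of 1 * (FreeGroup.of 2)⁻¹ * FreeGroup.of 1
    ∈ glRels by simp [glRels])
  rw [_root_.map_mul, _root_.map_mul, _root_.map_mul, map_inv] at this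
  exact this

lemma prel_ru : pr * pu * pr⁻¹ * pu = 1 := by
  have := mk_rel (show FreeGroup.of 2 * FreeGroup.of 0 * (FreeGroup.of 2)⁻¹ * FreeGroup.of 0
    ∈ glRels by simp [glRels])
  rw [_root_.map_mul, _root_.map_mul, _root_.map_mul, map_inv] at this
  exact this

lemma prel_s2u3 : ps ^ 2 = pu ^ 3 := by
  have := mk_rel (show (FreeGroup.of 1) ^ 2 * ((FreeGroup.of 0)⁻¹) ^ 3 ∈ glRels by simp [glRels])
  rw [_root_.map_mul, map_pow, map_pow, map_inv] at this
  rw [inv_pow, mul_inv_eq_one] at this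
  exact this

def zz : PG := ps ^ 2

lemma zz_sq : zz * zz = 1 := by
  rw [zz, ← pow_add]
  exact prel_s4

lemma zz_inv : zz⁻¹ = zz := by
  rw [inv_eq_iff_mul_eq_one]
  exact zz_sq

lemma pr_inv : pr⁻¹ = pr := by
  rw [inv_eq_iff_mul_eq_one, ← pow_two]
  exact prel_r2

lemma conj_ps : pr * ps * pr⁻¹ = ps⁻¹ := by
  have := prel_rs
  rwa [mul_eq_one_iff_eq_inv] at this

lemma conj_pu : pr * pu * pr⁻¹ = pu⁻¹ := by
  have := prel_ru
  rwa [mul_eq_one_iff_eq_inv] at this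

lemma conj_zz : pr * zz * pr⁻¹ = zz := by
  have h : pr * zz * pr⁻¹ = (pr * ps * pr⁻¹) * (pr * ps * pr⁻¹) := by
    rw [zz, pow_two]; group
  rw [h, conj_ps, ← _root_.mul_inv_rev, ← pow_two, ← zz, zz_inv]

lemma zz_comm (g : PG) : g * zz = zz * g := by
  have : g ∈ Subgroup.centralizer {zz} := by
    apply PresentedGroup.generated_by
    intro j
    rw [Subgroup.mem_centralizer_iff]
    intro h hh
    rw [Set.mem_singleton_iff] at hh
    subst hh
    fin_cases j
    · -- pu
      show zz * pu = pu * zz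
      rw [zz, prel_s2u3, ← pow_succ, ← pow_succ']
    · -- ps
      show zz * ps = ps * zz
      rw [zz, ← pow_succ, ← pow_succ']
    · -- pr
      show zz * pr = pr * zz
      have := conj_zz
      rw [pr_inv] at this
      calc zz * pr = (pr * zz * pr) * pr := by rw [this]
        _ = (pr * zz) * (pr * pr) := by group
        _ = pr * zz := by rw [← pow_two, prel_r2, mul_one]
  exact (Subgroup.mem_centralizer_iff.mp this zz rfl).symm

def Zc : Subgroup PG := Subgroup.zpowers zz

instance Zc_normal : Zc.Normal := by
  constructor
  intro n hn g
  rcases Subgroup.mem_zpowers_iff.mp hn with ⟨k, rfl⟩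
  have hc : Commute g zz := zz_comm g
  have : g * zz ^ k * g⁻¹ = zz ^ k := by
    rw [(hc.zpow_right k).eq]
    group
  rw [this]
  exact hn

abbrev QG := PG ⧸ Zc

noncomputable def mkQ : PG →* QG := QuotientGroup.mk' Zc

lemma zz_mem_Zc : zz ∈ Zc := Subgroup.mem_zpowers zz

lemma mkQ_ps_sq : (mkQ ps) ^ 2 = 1 := by
  rw [← map_pow, ← zz]
  exact (QuotientGroup.eq_one_iff _).mpr zz_mem_Zc

lemma mkQ_pu_cube : (mkQ pu) ^ 3 = 1 := by
  rw [← map_pow, ← prel_s2u3, ← zz]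
  exact (QuotientGroup.eq_one_iff _).mpr zz_mem_Zc

noncomputable def Ψfam : (i : Fin 2) → Hfam i →* QG
  | 0 => cyclicHom 2 (mkQ ps) mkQ_ps_sq
  | 1 => cyclicHom 3 (mkQ pu) mkQ_pu_cube

noncomputable def Ψ : Monoid.CoprodI Hfam →* QG := Monoid.CoprodI.lift Ψfam

noncomputable def χ : PG →* Equiv.Perm Irr := πg.comp φh

lemma χ_zz : χ zz = 1 := by
  rw [χ, MonoidHom.comp_apply, zz, map_pow, φ_ps, map_pow]
  exact hS2

lemma χ_Zc : ∀ x ∈ Zc, χ x = 1 := by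
  intro x hx
  rcases Subgroup.mem_zpowers_iff.mp hx with ⟨k, rfl⟩
  rw [map_zpow, χ_zz, _root_.one_zpow]

noncomputable def χ' : QG →* Equiv.Perm Irr := QuotientGroup.lift Zc χ χ_Zc

lemma χ'_mkQ (g : PG) : χ' (mkQ g) = χ g := rfl

lemma cyclicHom_congr {G : Type*} [Group G] (n : ℕ) [NeZero n] {g g' : G}
    (hgg' : g = g') (hg : g ^ n = 1) (hg' : g' ^ n = 1) :
    cyclicHom n g hg = cyclicHom n g' hg' := by subst hgg'; rfl

lemma χ'_comp_Ψ : χ'.comp Ψ = Monoid.CoprodI.lift ffam := by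
  apply Monoid.CoprodI.ext_hom
  intro i
  rw [Ψ, MonoidHom.comp_assoc, Monoid.CoprodI.lift_comp_of, Monoid.CoprodI.lift_comp_of]
  match i with
  | 0 =>
    show χ'.comp (cyclicHom 2 (mkQ ps) mkQ_ps_sq) = ffam 0
    rw [comp_cyclicHom]
    exact cyclicHom_congr 2 (by rw [χ'_mkQ, χ, MonoidHom.comp_apply, φ_ps]) _ hS2
  | 1 =>
    show χ'.comp (cyclicHom 3 (mkQ pu) mkQ_pu_cube) = ffam 1
    rw [comp_cyclicHom]
    exact cyclicHom_congr 3 (by rw [χ'_mkQ, χ, MonoidHom.comp_apply, φ_pu]) _ hU3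

def Nq : Subgroup PG := Subgroup.closure {pu, ps}

lemma conj_Nq : ∀ h ∈ Nq, pr * h * pr⁻¹ ∈ Nq := by
  intro h hh
  have hmap : Subgroup.map (MulAut.conj pr).toMonoidHom Nq ≤ Nq := by
    rw [Nq, MonoidHom.map_closure]
    apply Subgroup.closure_le _ |>.mpr
    rw [Set.image_pair]
    rintro x (rfl | rfl)
    · show (MulAut.conj pr) pu ∈ Nq
      rw [MulAut.conj_apply, conj_pu]
      exact inv_mem (Subgroup.subset_closure (by simp))
    · show (MulAut.conj pr) ps ∈ Nq
      rw [MulAut.conj_apply, conj_ps]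
      exact inv_mem (Subgroup.subset_closure (by simp))
  exact hmap ⟨h, hh, rfl⟩

instance Nq_normal : Nq.Normal := by
  rw [← Subgroup.normalizer_eq_top_iff]
  rw [Subgroup.eq_top_iff']
  intro g
  apply PresentedGroup.generated_by
  intro j
  match j with
  | 0 => exact Subgroup.le_normalizer (Subgroup.subset_closure (by simp [pu, Nq]))
  | 1 => exact Subgroup.le_normalizer (Subgroup.subset_closure (by simp [ps, Nq]))
  | 2 =>
    show pr ∈ Subgroup.normalizer (Nq : Set PG)
    rw [Subgroup.mem_normalizer_iff]
    intro h
    constructor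
    · intro hh
      exact conj_Nq h hh
    · intro hh
      have := conj_Nq _ hh
      rw [pr_inv] at this
      have he : pr * (pr * h * pr) * pr = h := by
        rw [show pr * (pr * h * pr) * pr = (pr * pr) * h * (pr * pr) by group,
          ← pow_two, prel_r2, one_mul, mul_one]
      rwa [he] at this

lemma sup_Nq_pr : Nq ⊔ Subgroup.zpowers pr = ⊤ := by
  rw [Subgroup.eq_top_iff']
  intro g
  apply PresentedGroup.generated_by
  intro j
  match j with
  | 0 => exact Subgroup.mem_sup_left (Subgroup.subset_closure (by simp [pu, Nq]))
  | 1 => exact Subgroup.mem_sup_left (Subgroup.subset_closure (by simp [ps, Nq]))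
  | 2 => exact Subgroup.mem_sup_right (Subgroup.mem_zpowers pr)

noncomputable def δh : PG →* ℤˣ := (Matrix.GeneralLinearGroup.det).comp φh

lemma δ_pu : δh pu = 1 := by
  rw [δh, MonoidHom.comp_apply, φ_pu]
  ext
  show (Ugen : Matrix (Fin 2) (Fin 2) ℤ).det = 1
  rw [show (Ugen : Matrix (Fin 2) (Fin 2) ℤ) = !![0,-1;1,1] from rfl]
  norm_num [Matrix.det_fin_two_of]

lemma δ_ps : δh ps = 1 := by
  rw [δh, MonoidHom.comp_apply, φ_ps]
  ext
  show (Sgen : Matrix (Fin 2) (Fin 2) ℤ).det = 1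
  rw [show (Sgen : Matrix (Fin 2) (Fin 2) ℤ) = !![0,-1;1,0] from rfl]
  norm_num [Matrix.det_fin_two_of]

lemma δ_pr : δh pr = -1 := by
  rw [δh, MonoidHom.comp_apply, φ_pr]
  ext
  show (Rgen : Matrix (Fin 2) (Fin 2) ℤ).det = ((-1 : ℤˣ) : ℤ)
  rw [show (Rgen : Matrix (Fin 2) (Fin 2) ℤ) = !![0,1;1,0] from rfl]
  norm_num [Matrix.det_fin_two_of]

lemma Nq_le_ker_δ : Nq ≤ δh.ker := by
  rw [Nq]
  apply Subgroup.closure_le _ |>.mpr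
  rintro x (rfl | rfl)
  · exact δ_pu
  · exact δ_ps

lemma φ_inj : Function.Injective φh := by
  rw [injective_iff_map_eq_one]
  intro q hq
  -- Step 1: q ∈ Nq
  have hq_top : q ∈ Nq ⊔ Subgroup.zpowers pr := by
    rw [sup_Nq_pr]; exact Subgroup.mem_top q
  have hq_mul : q ∈ (Nq : Set PG) * (Subgroup.zpowers pr : Set PG) := by
    rw [← Subgroup.normal_mul]
    exact hq_top
  obtain ⟨n, hn, w, hw, rfl⟩ := hq_mul
  beta_reduce at hq ⊢
  rcases Subgroup.mem_zpowers_iff.mp hw with ⟨k, rfl⟩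
  have hδ : δh (n * pr ^ k) = 1 := by rw [δh, MonoidHom.comp_apply, hq, _root_.map_one]
  rw [_root_.map_mul, (show δh n = 1 from Nq_le_ker_δ hn), one_mul, map_zpow, δ_pr] at hδ
  have hu2 : ((-1 : ℤˣ)) ^ (2:ℤ) = 1 := by
    rw [show (2:ℤ) = ((2:ℕ):ℤ) from rfl, zpow_natCast]; decide
  obtain ⟨m, rfl⟩ : Even k := by
    rcases Int.even_or_odd k with he | ⟨m, rfl⟩
    · exact he
    · exfalso
      rw [_root_.zpow_add, _root_.zpow_one, _root_.zpow_mul, hu2, _root_.one_zpow,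
        one_mul] at hδ
      exact absurd hδ (by decide)
  have hwone : pr ^ (m + m) = 1 := by
    rw [← two_mul, _root_.zpow_mul, show (2:ℤ) = ((2:ℕ):ℤ) from rfl, zpow_natCast, prel_r2,
      _root_.one_zpow]
  rw [hwone, mul_one] at hq ⊢
  -- Step 2: pass to the quotient
  have hmk : mkQ n ∈ Subgroup.closure {mkQ pu, mkQ ps} := by
    have : mkQ n ∈ Subgroup.map mkQ Nq := Subgroup.mem_map_of_mem _ hn
    rwa [Nq, MonoidHom.map_closure, Set.image_pair] at this
  have hrange : Subgroup.closure {mkQ pu, mkQ ps} ≤ Ψ.range := by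
    apply Subgroup.closure_le _ |>.mpr
    rintro x (rfl | rfl)
    · refine ⟨Monoid.CoprodI.of (show Hfam 1 from Multiplicative.ofAdd (1 : ZMod 3)), ?_⟩
      rw [Ψ, Monoid.CoprodI.lift_of]
      show (mkQ pu) ^ (Multiplicative.toAdd (Multiplicative.ofAdd (1 : ZMod 3))).val = mkQ pu
      rw [toAdd_ofAdd]
      norm_num [ZMod.val_one]
    · refine ⟨Monoid.CoprodI.of (show Hfam 0 from Multiplicative.ofAdd (1 : ZMod 2)), ?_⟩
      rw [Ψ, Monoid.CoprodI.lift_of]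
      show (mkQ ps) ^ (Multiplicative.toAdd (Multiplicative.ofAdd (1 : ZMod 2))).val = mkQ ps
      rw [toAdd_ofAdd]
      norm_num [ZMod.val_one]
  obtain ⟨w', hw'⟩ := hrange hmk
  -- Step 3: use the ping-pong injectivity
  have hlift : Monoid.CoprodI.lift ffam w' = 1 := by
    rw [← χ'_comp_Ψ, MonoidHom.comp_apply, hw', χ'_mkQ, χ, MonoidHom.comp_apply, hq, _root_.map_one]
  have hw1 : w' = 1 := pingpong (by rw [hlift, _root_.map_one])
  rw [hw1, _root_.map_one] at hw'
  have hnZ : n ∈ Zc := (QuotientGroup.eq_one_iff _).mp hw'.symm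
  -- Step 4: n is 1 or zz; zz is not in the kernel
  rcases Subgroup.mem_zpowers_iff.mp hnZ with ⟨j, rfl⟩
  have hzz2 : zz ^ (2:ℤ) = 1 := by
    rw [show (2:ℤ) = ((2:ℕ):ℤ) from rfl, zpow_natCast, pow_two, zz_sq]
  rcases Int.even_or_odd j with ⟨i, rfl⟩ | ⟨i, rfl⟩
  · rw [← two_mul, _root_.zpow_mul, hzz2, _root_.one_zpow]
  · exfalso
    rw [_root_.zpow_add, _root_.zpow_one, _root_.zpow_mul, hzz2, _root_.one_zpow,
      one_mul] at hq
    rw [zz, map_pow, φ_ps] at hq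
    have := congrArg (fun g : GL2Z => (g : Matrix (Fin 2) (Fin 2) ℤ) 0 0) hq
    simp only [Units.val_one, Matrix.one_apply_eq] at this
    rw [show ((Sgen ^ 2 : GL2Z) : Matrix (Fin 2) (Fin 2) ℤ)
        = (Sgen : Matrix (Fin 2) (Fin 2) ℤ) * (Sgen : Matrix (Fin 2) (Fin 2) ℤ) from by
      rw [pow_two, Units.val_mul]] at this
    rw [show (Sgen : Matrix (Fin 2) (Fin 2) ℤ) = !![0,-1;1,0] from rfl] at this
    norm_num [Matrix.mul_fin_two] at this

lemma φ_surj : Function.Surjective φh := by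
  rw [← MonoidHom.range_eq_top, Subgroup.eq_top_iff']
  intro g
  have : Hgen ≤ φh.range := by
    apply Subgroup.closure_le _ |>.mpr
    rintro x (rfl | rfl | rfl)
    · exact ⟨pu, φ_pu⟩
    · exact ⟨ps, φ_ps⟩
    · exact ⟨pr, φ_pr⟩
  exact this (mem_Hgen g)

end

/-- `GL(2,ℤ)` has the presentation
`⟨u, s, r | s⁴ = 1, r² = 1, rsr⁻¹ = s⁻¹, rur⁻¹ = u⁻¹, s² = u³⟩`: the homomorphism from
the free group on `u, s, r` to `GL(2,ℤ)` sending `s ↦ S`, `u ↦ U`, `r ↦ R` kills the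
normal closure of the relators, and the induced map from the presented group to
`GL(2,ℤ)` is an isomorphism. -/
theorem GL2Z_presentation :
    ∃ h : ∀ rel ∈ glRels, FreeGroup.lift genMap rel = 1,
      (∀ x ∈ Subgroup.normalClosure glRels, FreeGroup.lift genMap x = 1) ∧
      Function.Bijective (PresentedGroup.toGroup h) :=
  ⟨rels_hold, PresentedGroup.to_group_eq_one_of_mem_closure rels_hold, φ_inj, φ_surj⟩
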